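/- Let N be a feed-forward network and L a lift of N such that L is a backward connected feed-forward network. If ⋈₁ and ⋈₂ are balanced equivalence relations on L with L/⋈₁ = L/⋈₂ = N (the quotient maps commuting with the network structure maps of N), then ⋈₁ = ⋈₂. -/
import Mathlib


/-- a backward connected feed-forward lift `L` of a feed-forward
network `N` admits a unique balanced quotient onto `N`: two quotient maps
commuting with the network structure maps coincide. -/
theorem stmt_8 {CL CN : Type*} [Fintype CL] [Fintype CN] {k : ℕ}
    (σL : Fin k → CL → CL) (σN : Fin k → CN → CN)
    (n m : ℕ)
    (layL : CL → ℕ) (layN : CN → ℕ)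
    (hlayL : ∀ c, layL c ≤ n) (hlayN : ∀ c, layN c ≤ m)
    (hsurjL : ∀ j ≤ n, ∃ c, layL c = j) (hsurjN : ∀ j ≤ m, ∃ c, layN c = j)
    (hfixL : ∀ i c, layL c = 0 → σL i c = c)
    (hdownL : ∀ i c j, layL c = j + 1 → layL (σL i c) = j)
    (hsourceL : ∀ c, layL c < n → ∃ c' i, layL c' = layL c + 1 ∧ σL i c' = c)
    (hfixN : ∀ i c, layN c = 0 → σN i c = c)
    (hdownN : ∀ i c j, layN c = j + 1 → layN (σN i c) = j)
    (hsourceN : ∀ c, layN c < m → ∃ c' i, layN c' = layN c + 1 ∧ σN i c' = c)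
    (hbc : ∃ c : CL, ∀ c' : CL,
      Relation.ReflTransGen (fun a b => ∃ i, a = σL i b) c' c)
    (π₁ π₂ : CL → CN)
    (hπ₁surj : Function.Surjective π₁) (hπ₂surj : Function.Surjective π₂)
    (hπ₁ : ∀ i c, π₁ (σL i c) = σN i (π₁ c))
    (hπ₂ : ∀ i c, π₂ (σL i c) = σN i (π₂ c)) :
    π₁ = π₂ := by
  obtain ⟨cs, hcs⟩ := hbc
  set r : CL → CL → Prop := fun a b => ∃ i, a = σL i b with hr
  set r' : CN → CN → Prop := fun a b => ∃ i, a = σN i b with hr'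
  -- one step in N does not increase the layer
  have hstep : ∀ a b : CN, r' a b → layN a ≤ layN b := by
    rintro a b ⟨i, rfl⟩
    cases h : layN b with
    | zero => rw [hfixN i b h]; omega
    | succ j => rw [hdownN i b j h]; omega
  -- layers are monotone along paths in N
  have hmono : ∀ a b : CN, Relation.ReflTransGen r' a b → layN a ≤ layN b := by
    intro a b h
    induction h with
    | refl => exact le_rfl
    | tail h1 h2 ih => exact le_trans ih (hstep _ _ h2)
  -- a path between cells of the same layer is trivial
  have heq : ∀ a b : CN, Relation.ReflTransGen r' a b → layN a = layN b → a = b := by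
    intro a b h
    induction h with
    | refl => intro _; rfl
    | @tail b' c h1 h2 ih =>
      intro hlay
      have h1' : layN a ≤ layN b' := hmono _ _ h1
      have h2' : layN b' ≤ layN c := hstep _ _ h2
      have hb'c : layN b' = layN c := by omega
      have hab' : layN a = layN b' := by omega
      obtain ⟨i, rfl⟩ := h2
      have hc0 : layN c = 0 := by
        cases hc : layN c with
        | zero => rfl
        | succ j => exfalso; have := hdownN i c j hc; omega
      rw [ih hab', hfixN i c hc0]
  -- paths in L map to paths in N under a commuting map
  have hmap : ∀ (π : CL → CN), (∀ i c, π (σL i c) = σN i (π c)) →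
      ∀ a b : CL, Relation.ReflTransGen r a b →
        Relation.ReflTransGen r' (π a) (π b) := by
    intro π hπ a b h
    induction h with
    | refl => exact Relation.ReflTransGen.refl
    | @tail b' c h1 h2 ih =>
      obtain ⟨i, rfl⟩ := h2
      exact ih.tail ⟨i, hπ i c⟩
  -- every cell of N is connected to π cs, and π cs has layer m
  have hkey : ∀ (π : CL → CN), Function.Surjective π →
      (∀ i c, π (σL i c) = σN i (π c)) →
      (∀ d : CN, Relation.ReflTransGen r' d (π cs)) ∧ layN (π cs) = m := by
    intro π hsurj hπ
    have hall : ∀ d : CN, Relation.ReflTransGen r' d (π cs) := by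
      intro d
      obtain ⟨c, rfl⟩ := hsurj d
      exact hmap π hπ c cs (hcs c)
    refine ⟨hall, ?_⟩
    obtain ⟨dm, hdm⟩ := hsurjN m le_rfl
    have h1 : layN dm ≤ layN (π cs) := hmono _ _ (hall dm)
    have h2 : layN (π cs) ≤ m := hlayN _
    omega
  obtain ⟨hall₁, hlay₁⟩ := hkey π₁ hπ₁surj hπ₁
  obtain ⟨hall₂, hlay₂⟩ := hkey π₂ hπ₂surj hπ₂
  have hcs_eq : π₂ cs = π₁ cs := heq _ _ (hall₁ (π₂ cs)) (by omega)
  funext c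
  refine Relation.ReflTransGen.head_induction_on (hcs c) (by rw [hcs_eq]) ?_
  intro a c' hac' _ ih
  obtain ⟨i, rfl⟩ := hac'
  rw [hπ₁ i c', hπ₂ i c', ih]
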